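/- Define f(X, μ) = 3(μ−1)X + 1/X for X > 0 and 0 < μ < 1, subject to the constraint (1−μ)√(μ+2) · X ≥ √2. Then f(X, μ) ≤ −2. -/
import Mathlib


/-- If `X > 0`, `0 < μ < 1` and `(1−μ)√(μ+2)·X ≥ √2`, then
`3(μ−1)X + 1/X ≤ −2`. -/
theorem stmt5 (X μ : ℝ) (hX : 0 < X) (hμ0 : 0 < μ) (hμ1 : μ < 1)
    (hcon : Real.sqrt 2 ≤ (1 - μ) * Real.sqrt (μ + 2) * X) :
    3 * (μ - 1) * X + 1 / X ≤ -2 := by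
  set s := Real.sqrt (μ + 2) with hs_def
  set t := Real.sqrt 2 with ht_def
  have hs2 : s ^ 2 = μ + 2 := Real.sq_sqrt (by linarith)
  have ht2 : t ^ 2 = 2 := Real.sq_sqrt (by norm_num)
  have hspos : 0 < s := Real.sqrt_pos.mpr (by linarith)
  have htpos : 0 < t := Real.sqrt_pos.mpr (by norm_num)
  -- 2s ≤ 3t since 4(μ+2) ≤ 18
  have h5 : 2 * s ≤ 3 * t := by
    nlinarith [mul_pos hspos htpos]
  -- 2ts ≤ 4 + μ + μ² since 8(μ+2) ≤ (4+μ+μ²)²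
  have h4 : 2 * t * s ≤ 4 + μ + μ ^ 2 := by
    nlinarith [mul_pos htpos hspos, sq_nonneg μ, sq_nonneg (μ ^ 2), sq_nonneg (μ + μ ^ 2)]
  have hct : 0 ≤ (1 - μ) * s * X - t := by linarith
  have hsum : 0 ≤ 3 * ((1 - μ) * s * X + t) - 2 * s := by nlinarith [mul_pos hspos hX]
  have main : (1 - μ) * (μ + 2) + 2 * (1 - μ) * (μ + 2) * X
      ≤ 3 * (1 - μ) ^ 2 * (μ + 2) * X ^ 2 := by
    nlinarith [mul_nonneg hct hsum]
  have hpos : (0 : ℝ) < (1 - μ) * (μ + 2) := by nlinarith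
  have key : 1 + 2 * X ≤ 3 * (1 - μ) * X ^ 2 := by nlinarith [main, hpos]
  have h1 : 1 / X ≤ 3 * (1 - μ) * X - 2 := by
    rw [div_le_iff₀ hX]
    nlinarith [key]
  linarith
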